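/- Fix a positive integer R, let Ω := {0,1,2,*}, and let 𝒟 be the directed graph with vertex set {s,t} ∪ {v^α_x : α ∈ {a,b,c,d}, x ∈ Ω^R} and the following arcs: for every x ∈ Ω^R, arcs (s, v^c_x), (v^a_x, s), (s, v^a_x), (v^d_x, t), (t, v^d_x), (t, v^b_x); and for every ordered pair (α,β) ∈ {(c,a),(a,b),(b,c),(c,b),(d,c),(b,d)} and x,y ∈ Ω^R, an arc from v^α_x to v^β_y if and only if for every coordinate 1 ≤ j ≤ R one has y_j = (x_j + 1) mod 3 or y_j = * or x_j = *. Then for every q ∈ [R], after deleting the vertex set V_q := {v^α_x : α ∈ {a,b,c,d}, x_q = * or x_q = 0}, no vertex of 𝒟 has directed paths to both s and t. -/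

import Mathlib

/-- The labels of the internal vertex groups of the dictatorship test graph. -/
inductive ABCD : Type
  | a | b | c | d
  deriving DecidableEq

/-- The coordinatewise compatibility condition: `v = u + 1 (mod 3)`, or one of the
two coordinates is `* = none`. -/
def nextOk3 (u v : Option (Fin 3)) : Prop :=
  u = none ∨ v = none ∨ ∃ k : Fin 3, u = some k ∧ v = some (k + 1)

/-- The vertices of the dictatorship test graph `𝒟^global_{R,ε}`:
`Sum.inl (α, x)` is `v^α_x`, `Sum.inr false = s`, `Sum.inr true = t`. -/
abbrev W14 (R : ℕ) : Type := (ABCD × (Fin R → Option (Fin 3))) ⊕ Bool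

/-- The arcs of the dictatorship test graph. -/
def dArc14 (R : ℕ) : W14 R → W14 R → Prop := fun u v =>
  match u, v with
  | Sum.inl (α, x), Sum.inl (β, y) =>
      ((α, β) = (ABCD.c, ABCD.a) ∨ (α, β) = (ABCD.a, ABCD.b) ∨
       (α, β) = (ABCD.b, ABCD.c) ∨ (α, β) = (ABCD.c, ABCD.b) ∨
       (α, β) = (ABCD.d, ABCD.c) ∨ (α, β) = (ABCD.b, ABCD.d)) ∧
      ∀ j : Fin R, nextOk3 (x j) (y j)
  | Sum.inr false, Sum.inl (α, _) => α = ABCD.c ∨ α = ABCD.a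
  | Sum.inl (α, _), Sum.inr false => α = ABCD.a
  | Sum.inr true, Sum.inl (α, _) => α = ABCD.d ∨ α = ABCD.b
  | Sum.inl (α, _), Sum.inr true => α = ABCD.d
  | _, _ => False

/-- completeness of the dictatorship test for NodeDoubleCut: after
removing `V_q = {v^α_x : x_q = * or 0}`, no vertex has directed paths to both `s`
and `t`. -/
theorem stmt_14 (R : ℕ) (q : Fin R) (Vq : Set (W14 R))
    (hVq : Vq = {w | ∃ α x, w = Sum.inl (α, x) ∧ (x q = none ∨ x q = some 0)}) :
    ∀ w : W14 R, w ∉ Vq →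
      ¬ (Relation.ReflTransGen
            (fun x y => dArc14 R x y ∧ x ∉ Vq ∧ y ∉ Vq) w (Sum.inr false) ∧
         Relation.ReflTransGen
            (fun x y => dArc14 R x y ∧ x ∉ Vq ∧ y ∉ Vq) w (Sum.inr true)) := by
  subst hVq
  -- survivors have x q = some 1 or some 2
  have surv : ∀ (α : ABCD) (x : Fin R → Option (Fin 3)),
      (Sum.inl (α, x) : W14 R) ∉
        {w : W14 R | ∃ α x, w = Sum.inl (α, x) ∧ (x q = none ∨ x q = some 0)} →
      x q = some 1 ∨ x q = some 2 := by
    intro α x h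
    rcases hx : x q with _ | k
    · exact absurd ⟨α, x, rfl, Or.inl hx⟩ h
    · have hk : k = 0 ∨ k = 1 ∨ k = 2 := by omega
      rcases hk with rfl | rfl | rfl
      · exact absurd ⟨α, x, rfl, Or.inr hx⟩ h
      · exact Or.inl rfl
      · exact Or.inr rfl
  set Vq : Set (W14 R) :=
    {w : W14 R | ∃ α x, w = Sum.inl (α, x) ∧ (x q = none ∨ x q = some 0)} with hVq
  -- extract the q-th coordinate relation along an internal arc between survivors
  have coord : ∀ (x y : Fin R → Option (Fin 3)),
      (∀ j : Fin R, nextOk3 (x j) (y j)) →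
      (x q = some 1 ∨ x q = some 2) → (y q = some 1 ∨ y q = some 2) →
      x q = some 1 ∧ y q = some 2 := by
    intro x y hn hx hy
    rcases hn q with h | h | ⟨k, hk1, hk2⟩
    · rcases hx with hx | hx <;> simp [hx] at h
    · rcases hy with hy | hy <;> simp [hy] at h
    · rcases hx with hx | hx
      · constructor
        · exact hx
        · rw [hx] at hk1
          have : k = 1 := by simpa using hk1.symm
          subst this
          simpa using hk2
      · exfalso
        rw [hx] at hk1
        have : k = 2 := by simpa using hk1.symm
        subst this
        have : y q = some 0 := by simpa using hk2
        rcases hy with hy | hy <;> rw [hy] at this <;> simp at this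
  classical
  set P : W14 R → Prop := fun w =>
    w = Sum.inr false ∨ (∃ x, w = Sum.inl (ABCD.a, x)) ∨
      (∃ x, w = Sum.inl (ABCD.c, x) ∧ x q = some 1) with hP
  set Q : W14 R → Prop := fun w =>
    w = Sum.inr true ∨ (∃ x, w = Sum.inl (ABCD.d, x)) ∨
      (∃ x, w = Sum.inl (ABCD.b, x) ∧ x q = some 1) with hQ
  have stepP : ∀ u v : W14 R, (dArc14 R u v ∧ u ∉ Vq ∧ v ∉ Vq) → P v → P u := by
    rintro (⟨α, x⟩ | (_ | _)) v ⟨harc, hu, hv⟩ hPv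
    · rcases v with ⟨β, y⟩ | (_ | _)
      · obtain ⟨hαβ, hnext⟩ := harc
        have hxq := surv α x hu
        have hyq := surv β y hv
        obtain ⟨hx1, hy2⟩ := coord x y hnext hxq hyq
        rcases hPv with h | ⟨z, hz⟩ | ⟨z, hz, hz1⟩
        · simp at h
        · -- β = a, so α = c, and x q = some 1
          have hβ : β = ABCD.a := by
            have := congrArg (fun w => match w with
              | Sum.inl (β, _) => β
              | _ => ABCD.a) hz
            simpa using this
          subst hβ
          have hα : α = ABCD.c := by
            rcases hαβ with h | h | h | h | h | h
            · exact congrArg Prod.fst h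
            all_goals exact ABCD.noConfusion (congrArg Prod.snd h)
          exact Or.inr (Or.inr ⟨x, by rw [hα], hx1⟩)
        · -- β = c, y q = some 1, impossible since y q = some 2
          exfalso
          have hβ : β = ABCD.c ∧ y = z := by
            have := Sum.inl.inj hz
            exact ⟨congrArg Prod.fst this, congrArg Prod.snd this⟩
          rw [hβ.2] at hy2
          rw [hz1] at hy2
          simp at hy2
      · -- v = s : arc means α = a
        exact Or.inr (Or.inl ⟨x, by rw [harc]⟩)
      · -- v = t : P t is false
        exfalso
        rcases hPv with h | ⟨z, hz⟩ | ⟨z, hz, _⟩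
        · simpa using h
        · exact Sum.inr_ne_inl hz
        · exact Sum.inr_ne_inl hz
    · -- u = s
      exact Or.inl rfl
    · -- u = t : arcs from t go to d- or b-vertices or nothing in P
      exfalso
      rcases v with ⟨β, y⟩ | (_ | _)
      · rcases hPv with h | ⟨z, hz⟩ | ⟨z, hz, _⟩
        · simp at h
        · have hβ : β = ABCD.a := congrArg Prod.fst (Sum.inl.inj hz)
          rcases harc with h | h <;> rw [hβ] at h <;> exact ABCD.noConfusion h
        · have hβ : β = ABCD.c := congrArg Prod.fst (Sum.inl.inj hz)
          rcases harc with h | h <;> rw [hβ] at h <;> exact ABCD.noConfusion h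
      · exact harc
      · exact harc
  have stepQ : ∀ u v : W14 R, (dArc14 R u v ∧ u ∉ Vq ∧ v ∉ Vq) → Q v → Q u := by
    rintro (⟨α, x⟩ | (_ | _)) v ⟨harc, hu, hv⟩ hQv
    · rcases v with ⟨β, y⟩ | (_ | _)
      · obtain ⟨hαβ, hnext⟩ := harc
        have hxq := surv α x hu
        have hyq := surv β y hv
        obtain ⟨hx1, hy2⟩ := coord x y hnext hxq hyq
        rcases hQv with h | ⟨z, hz⟩ | ⟨z, hz, hz1⟩
        · simp at h
        · -- β = d, so α = b, and x q = some 1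
          have hβ : β = ABCD.d := congrArg Prod.fst (Sum.inl.inj hz)
          subst hβ
          have hα : α = ABCD.b := by
            rcases hαβ with h | h | h | h | h | h
            all_goals first
              | exact congrArg Prod.fst h
              | exact ABCD.noConfusion (congrArg Prod.snd h)
          exact Or.inr (Or.inr ⟨x, by rw [hα], hx1⟩)
        · -- β = b, y q = some 1, impossible since y q = some 2
          exfalso
          have := Sum.inl.inj hz
          have hy : y = z := congrArg Prod.snd this
          rw [hy, hz1] at hy2
          simp at hy2
      · -- v = s : Q s is false
        exfalso
        rcases hQv with h | ⟨z, hz⟩ | ⟨z, hz, _⟩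
        · simpa using h
        · exact Sum.inr_ne_inl hz
        · exact Sum.inr_ne_inl hz
      · -- v = t : arc means α = d
        exact Or.inr (Or.inl ⟨x, by rw [harc]⟩)
    · -- u = s : arcs from s go to c- or a-vertices
      exfalso
      rcases v with ⟨β, y⟩ | (_ | _)
      · rcases hQv with h | ⟨z, hz⟩ | ⟨z, hz, _⟩
        · simp at h
        · have hβ : β = ABCD.d := congrArg Prod.fst (Sum.inl.inj hz)
          rcases harc with h | h <;> rw [hβ] at h <;> exact ABCD.noConfusion h
        · have hβ : β = ABCD.b := congrArg Prod.fst (Sum.inl.inj hz)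
          rcases harc with h | h <;> rw [hβ] at h <;> exact ABCD.noConfusion h
      · exact harc
      · exact harc
    · -- u = t
      exact Or.inl rfl
  rintro w hw ⟨hs, ht⟩
  have hPw : P w := by
    refine Relation.ReflTransGen.head_induction_on hs ?_ ?_
    · exact Or.inl rfl
    · intro a c h' _ ih
      exact stepP a c h' ih
  have hQw : Q w := by
    refine Relation.ReflTransGen.head_induction_on ht ?_ ?_
    · exact Or.inl rfl
    · intro a c h' _ ih
      exact stepQ a c h' ih
  rcases hPw with h | ⟨z, h⟩ | ⟨z, h, _⟩ <;> subst h <;>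
    rcases hQw with h' | ⟨z', h'⟩ | ⟨z', h', _⟩ <;>
      first
        | exact Sum.noConfusion h'
        | exact ABCD.noConfusion (congrArg Prod.fst (Sum.inl.inj h'))
        | simpa using h'
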